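/- Suppose N: (0,∞) → [0,∞) is nondecreasing and ∫₀^∞ e^{-tλ} dN(λ) ~ C·t^{-n} as t → 0⁺ for some constants C > 0 and n ≥ 1. Then N(λ) ~ (C/Γ(n+1)) λⁿ as λ → ∞. -/

import Mathlib

open MeasureTheory Filter Real Set Polynomial
open scoped ENNReal NNReal

set_option maxHeartbeats 1000000

namespace KaramataAux


noncomputable def phi (b c y : ℝ) : ℝ := max 0 (min 1 ((y - b) / (c - b))) / max y c

variable {b c y : ℝ}

lemma phi_cont (hc : 0 < c) : Continuous (phi b c) := by
  apply Continuous.div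
  · exact continuous_const.max (continuous_const.min
      ((continuous_id.sub continuous_const).div_const _))
  · exact continuous_id.max continuous_const
  · exact fun y => (hc.trans_le (le_max_right y c)).ne'

lemma phi_nonneg (hc : 0 < c) : 0 ≤ phi b c y :=
  div_nonneg (le_max_left 0 _) (hc.le.trans (le_max_right y c))

lemma phi_le (hc : 0 < c) : phi b c y ≤ 1 / c :=
  div_le_div₀ zero_le_one (max_le zero_le_one (min_le_left 1 _)) hc (le_max_right y c)

lemma phi_mul_le_one (hc : 0 < c) (hy : 0 ≤ y) : y * phi b c y ≤ 1 := by
  have hM : 0 < max y c := hc.trans_le (le_max_right y c)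
  calc y * phi b c y ≤ max y c * phi b c y :=
        mul_le_mul_of_nonneg_right (le_max_left y c) (phi_nonneg hc)
    _ = max 0 (min 1 ((y - b) / (c - b))) := by
        rw [phi, mul_div_cancel₀ _ hM.ne']
    _ ≤ 1 := max_le zero_le_one (min_le_left 1 _)

lemma phi_eq_zero (hbc : b < c) (hy : y < b) : phi b c y = 0 := by
  have h1 : (y - b) / (c - b) ≤ 0 :=
    div_nonpos_of_nonpos_of_nonneg (by linarith) (by linarith)
  rw [phi, max_eq_left (le_trans (min_le_right 1 _) h1), zero_div]

lemma phi_mul_eq_one (hc : 0 < c) (hbc : b < c) (hy : c ≤ y) : y * phi b c y = 1 := by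
  have hy0 : 0 < y := hc.trans_le hy
  have h1 : (1:ℝ) ≤ (y - b) / (c - b) := (one_le_div (by linarith)).2 (by linarith)
  rw [phi, min_eq_left h1, max_eq_right zero_le_one, max_eq_left hy,
    mul_one_div, div_self hy0.ne']

lemma J_int (m : ℕ) {c : ℝ} (hc : 0 < c) :
    IntegrableOn (fun x => x ^ m * Real.exp (-(c * x))) (Ioi 0) := by
  have h1 : IntegrableOn (fun x : ℝ => Real.exp (-x) * x ^ ((m + 1 : ℝ) - 1)) (Ioi 0) :=
    Real.GammaIntegral_convergent (by positivity)
  have h2 : IntegrableOn (fun x : ℝ => Real.exp (-(c * x)) * (c * x) ^ ((m + 1 : ℝ) - 1))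
      (Ioi 0) := by
    have := (integrableOn_Ioi_comp_mul_left_iff
      (fun x : ℝ => Real.exp (-x) * x ^ ((m + 1 : ℝ) - 1)) 0 hc).2 (by simpa using h1)
    simpa using this
  have h3 := h2.const_mul ((c : ℝ) ^ m)⁻¹
  apply h3.congr
  filter_upwards [ae_restrict_mem measurableSet_Ioi] with x hx
  have hcx : (c * x) ^ ((m + 1 : ℝ) - 1) = c ^ m * x ^ m := by
    rw [show (m + 1 : ℝ) - 1 = (m : ℝ) by ring, Real.rpow_natCast, mul_pow]
  rw [hcx]
  have : (c:ℝ) ^ m ≠ 0 := by positivity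
  field_simp

lemma J_val (m : ℕ) {c : ℝ} (hc : 0 < c) :
    ∫ x in Ioi (0:ℝ), x ^ m * Real.exp (-(c * x)) = (m.factorial : ℝ) / c ^ (m + 1) := by
  have h1 := integral_rpow_mul_exp_neg_mul_Ioi (a := (m + 1 : ℝ)) (by positivity) hc
  have h2 : ∀ x ∈ Ioi (0:ℝ), x ^ ((m + 1 : ℝ) - 1) * Real.exp (-(c * x))
      = x ^ m * Real.exp (-(c * x)) := by
    intro x hx
    rw [show (m + 1 : ℝ) - 1 = (m : ℝ) by ring, Real.rpow_natCast]
  rw [setIntegral_congr_fun measurableSet_Ioi h2] at h1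
  rw [h1]
  rw [show (m + 1 : ℝ) = ((m + 1 : ℕ) : ℝ) by push_cast; ring, Real.rpow_natCast,
    show ((m + 1 : ℕ) : ℝ) = (m : ℝ) + 1 by push_cast; ring, Real.Gamma_nat_eq_factorial]
  rw [div_pow, one_pow]
  ring



lemma ae_nn (μ : Measure ℝ) (hμ : μ (Set.Iio 0) = 0) : ∀ᵐ x ∂μ, 0 ≤ x := by
  rw [ae_iff]
  have : {x : ℝ | ¬ 0 ≤ x} = Set.Iio 0 := by ext x; simp [not_le]
  rw [this]; exact hμ

lemma integrable_exp (n : ℕ) (C : ℝ) (hC : 0 < C) (μ : Measure ℝ)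
    (hμ : μ (Set.Iio 0) = 0)
    (h : Tendsto (fun t : ℝ => t ^ n * ∫ x, Real.exp (-(t * x)) ∂μ)
      (nhdsWithin 0 (Set.Ioi 0)) (nhds C)) :
    ∀ t : ℝ, 0 < t → Integrable (fun x => Real.exp (-(t * x))) μ := by
  by_contra hcon
  push_neg at hcon
  obtain ⟨t₀, ht₀, hni⟩ := hcon
  have hzero : ∀ t ∈ Ioo (0:ℝ) t₀,
      t ^ n * ∫ x, Real.exp (-(t * x)) ∂μ = 0 := by
    intro t ht
    have : ¬ Integrable (fun x => Real.exp (-(t * x))) μ := by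
      intro hi
      apply hni
      refine hi.mono' (Continuous.aestronglyMeasurable (by continuity)) ?_
      filter_upwards [ae_nn μ hμ] with x hx
      rw [Real.norm_eq_abs, Real.abs_exp]
      exact Real.exp_le_exp.2 (by nlinarith [ht.1.le, ht.2.le])
    rw [integral_undef this, mul_zero]
  have h0 : Tendsto (fun t : ℝ => t ^ n * ∫ x, Real.exp (-(t * x)) ∂μ)
      (nhdsWithin 0 (Set.Ioi 0)) (nhds 0) := by
    apply Tendsto.congr' _ tendsto_const_nhds
    filter_upwards [Ioo_mem_nhdsGT_of_mem ⟨le_refl (0:ℝ), ht₀⟩] with t ht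
    exact (hzero t ht).symm
  exact absurd (tendsto_nhds_unique h h0) hC.ne'

lemma finite_Iic (μ : Measure ℝ) (hμ : μ (Set.Iio 0) = 0)
    (hi : Integrable (fun x => Real.exp (-(1 * x))) μ) (lam : ℝ) :
    μ (Set.Iic lam) < ⊤ := by
  have hsub : Set.Iic lam ⊆ Set.Iio 0 ∪ Set.Icc 0 lam := by
    intro x hx
    rcases lt_or_ge x 0 with hx0 | hx0
    · exact Or.inl hx0
    · exact Or.inr ⟨hx0, hx⟩
  have hIcc : μ (Set.Icc 0 lam) < ⊤ := by
    have hb : ENNReal.ofReal (Real.exp (-(1 * lam))) * μ (Set.Icc 0 lam)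
        ≤ ∫⁻ x, ‖Real.exp (-(1 * x))‖₊ ∂μ := by
      have step1 : ∀ x ∈ Set.Icc 0 lam, ENNReal.ofReal (Real.exp (-(1 * lam)))
          ≤ (‖Real.exp (-(1 * x))‖₊ : ℝ≥0∞) := by
        intro x hx
        rw [← enorm_eq_nnnorm, Real.enorm_eq_ofReal (Real.exp_pos _).le]
        exact ENNReal.ofReal_le_ofReal (Real.exp_le_exp.2 (by nlinarith [hx.1, hx.2]))
      calc ENNReal.ofReal (Real.exp (-(1 * lam))) * μ (Set.Icc 0 lam)
          = ∫⁻ _ in Set.Icc 0 lam, ENNReal.ofReal (Real.exp (-(1 * lam))) ∂μ := by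
            rw [setLIntegral_const]
        _ ≤ ∫⁻ x in Set.Icc 0 lam, (‖Real.exp (-(1 * x))‖₊ : ℝ≥0∞) ∂μ :=
            setLIntegral_mono ((Real.continuous_exp.comp
              (by continuity)).measurable.nnnorm.coe_nnreal_ennreal) step1
        _ ≤ ∫⁻ x, ‖Real.exp (-(1 * x))‖₊ ∂μ := setLIntegral_le_lintegral _ _
    by_contra htop
    push_neg at htop
    have htop' : μ (Set.Icc 0 lam) = ⊤ := top_le_iff.mp htop
    rw [htop', ENNReal.mul_top (ENNReal.ofReal_pos.2 (Real.exp_pos _)).ne'] at hb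
    exact absurd (top_le_iff.mp hb) hi.2.ne
  calc μ (Set.Iic lam) ≤ μ (Set.Iio 0 ∪ Set.Icc 0 lam) := measure_mono hsub
    _ ≤ μ (Set.Iio 0) + μ (Set.Icc 0 lam) := measure_union_le _ _
    _ < ⊤ := by rw [hμ, zero_add]; exact hIcc



lemma mono_limit (n : ℕ) (C : ℝ) (μ : Measure ℝ)
    (h : Tendsto (fun t : ℝ => t ^ n * ∫ x, Real.exp (-(t * x)) ∂μ)
      (nhdsWithin 0 (Set.Ioi 0)) (nhds C)) (k : ℕ) :
    Tendsto (fun t : ℝ => t ^ n * ∫ x, Real.exp (-((((k:ℝ)+1) * t) * x)) ∂μ)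
      (nhdsWithin 0 (Set.Ioi 0)) (nhds (C / ((k:ℝ)+1) ^ n)) := by
  set c : ℝ := (k:ℝ) + 1 with hcdef
  have hc0 : 0 < c := by positivity
  have hcomp : Tendsto (fun t : ℝ => c * t) (nhdsWithin 0 (Set.Ioi 0))
      (nhdsWithin 0 (Set.Ioi 0)) := by
    apply tendsto_nhdsWithin_of_tendsto_nhds_of_eventually_within
    · have h1 : Tendsto (fun t : ℝ => c * t) (nhds 0) (nhds (c * 0)) :=
        (continuous_const.mul continuous_id).tendsto 0
      rw [mul_zero] at h1
      exact h1.mono_left nhdsWithin_le_nhds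
    · filter_upwards [self_mem_nhdsWithin] with t ht
      exact mul_pos hc0 ht
  have h2 := (h.comp hcomp).const_mul ((c ^ n)⁻¹)
  have hval : (c ^ n)⁻¹ * C = C / c ^ n := by rw [inv_mul_eq_div]
  rw [hval] at h2
  apply h2.congr
  intro t
  show (c ^ n)⁻¹ * ((c * t) ^ n * ∫ x, Real.exp (-(c * t * x)) ∂μ)
      = t ^ n * ∫ x, Real.exp (-(c * t * x)) ∂μ
  have hcn : (c : ℝ) ^ n ≠ 0 := by positivity
  rw [mul_pow, ← mul_assoc, ← mul_assoc, inv_mul_cancel₀ hcn, one_mul]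

lemma key (n m : ℕ) (hnm : n = m + 1) (C : ℝ) (μ : Measure ℝ)
    (hint : ∀ t : ℝ, 0 < t → Integrable (fun x => Real.exp (-(t * x))) μ)
    (h : Tendsto (fun t : ℝ => t ^ n * ∫ x, Real.exp (-(t * x)) ∂μ)
      (nhdsWithin 0 (Set.Ioi 0)) (nhds C)) (p : ℝ[X]) :
    Tendsto (fun t : ℝ => t ^ n * ∫ x,
        p.eval (Real.exp (-(t * x))) * Real.exp (-(t * x)) ∂μ)
      (nhdsWithin 0 (Set.Ioi 0))
      (nhds (C / m.factorial *
        ∫ x in Ioi (0:ℝ), p.eval (Real.exp (-x)) * Real.exp (-x) * x ^ m)) := by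
  set d := p.natDegree + 1 with hd
  have hIeq : ∫ x in Ioi (0:ℝ), p.eval (Real.exp (-x)) * Real.exp (-x) * x ^ m
      = ∑ k ∈ Finset.range d, p.coeff k * ((m.factorial : ℝ) / ((k:ℝ)+1) ^ (m+1)) := by
    have hptw : ∀ x : ℝ, p.eval (Real.exp (-x)) * Real.exp (-x) * x ^ m
        = ∑ k ∈ Finset.range d, p.coeff k * (x ^ m * Real.exp (-(((k:ℝ)+1) * x))) := by
      intro x
      rw [Polynomial.eval_eq_sum_range, Finset.sum_mul, Finset.sum_mul]
      refine Finset.sum_congr rfl fun k _ => ?_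
      have h1 : Real.exp (-x) ^ k * Real.exp (-x) = Real.exp (-(((k:ℝ)+1) * x)) := by
        rw [← pow_succ, ← Real.exp_nat_mul]
        congr 1; push_cast; ring
      calc p.coeff k * Real.exp (-x) ^ k * Real.exp (-x) * x ^ m
          = p.coeff k * (Real.exp (-x) ^ k * Real.exp (-x)) * x ^ m := by ring
        _ = p.coeff k * (x ^ m * Real.exp (-(((k:ℝ)+1) * x))) := by rw [h1]; ring
    simp_rw [hptw]
    rw [integral_finset_sum]
    · refine Finset.sum_congr rfl fun k _ => ?_
      rw [integral_const_mul, J_val m (by positivity : (0:ℝ) < (k:ℝ)+1)]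
    · intro k _
      exact (J_int m (by positivity : (0:ℝ) < (k:ℝ)+1)).const_mul _
  have hμeq : ∀ t : ℝ, 0 < t →
      ∫ x, p.eval (Real.exp (-(t * x))) * Real.exp (-(t * x)) ∂μ
      = ∑ k ∈ Finset.range d, p.coeff k * ∫ x, Real.exp (-((((k:ℝ)+1) * t) * x)) ∂μ := by
    intro t ht
    have hptw : ∀ x : ℝ, p.eval (Real.exp (-(t * x))) * Real.exp (-(t * x))
        = ∑ k ∈ Finset.range d, p.coeff k * Real.exp (-((((k:ℝ)+1) * t) * x)) := by
      intro x
      rw [Polynomial.eval_eq_sum_range, Finset.sum_mul]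
      refine Finset.sum_congr rfl fun k _ => ?_
      have h1 : Real.exp (-(t*x)) ^ k * Real.exp (-(t*x))
          = Real.exp (-((((k:ℝ)+1) * t) * x)) := by
        rw [← pow_succ, ← Real.exp_nat_mul]; congr 1; push_cast; ring
      rw [mul_assoc, h1]
    simp_rw [hptw]
    rw [integral_finset_sum]
    · exact Finset.sum_congr rfl fun k _ => integral_const_mul _ _
    · intro k _
      exact (hint (((k:ℝ)+1) * t) (by positivity)).const_mul _
  have hlim : Tendsto (fun t : ℝ => ∑ k ∈ Finset.range d,
      p.coeff k * (t ^ n * ∫ x, Real.exp (-((((k:ℝ)+1) * t) * x)) ∂μ))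
      (nhdsWithin 0 (Set.Ioi 0))
      (nhds (∑ k ∈ Finset.range d, p.coeff k * (C / ((k:ℝ)+1) ^ n))) :=
    tendsto_finset_sum _ fun k _ => (mono_limit n C μ h k).const_mul _
  have hval : (∑ k ∈ Finset.range d, p.coeff k * (C / ((k:ℝ)+1) ^ n))
      = C / m.factorial * ∑ k ∈ Finset.range d,
        p.coeff k * ((m.factorial : ℝ) / ((k:ℝ)+1) ^ (m+1)) := by
    rw [Finset.mul_sum]
    refine Finset.sum_congr rfl fun k _ => ?_
    have hm0 : (m.factorial : ℝ) ≠ 0 := by positivity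
    have hk0 : ((k:ℝ)+1) ^ (m+1) ≠ 0 := by positivity
    subst hnm
    field_simp
  rw [hIeq, ← hval]
  apply hlim.congr'
  filter_upwards [self_mem_nhdsWithin] with t ht
  rw [hμeq t ht, Finset.mul_sum]
  exact Finset.sum_congr rfl fun k _ => by ring

lemma exp_mem_Icc {u : ℝ} (hu : u ≤ 0) : Real.exp u ∈ Icc (0:ℝ) 1 :=
  ⟨(Real.exp_pos _).le, by
    calc Real.exp u ≤ Real.exp 0 := Real.exp_le_exp.2 hu
      _ = 1 := Real.exp_zero⟩

lemma intOn_aux (m : ℕ) (f : ℝ → ℝ) (hf : Continuous f) (K : ℝ)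
    (hK : ∀ y ∈ Icc (0:ℝ) 1, |f y| ≤ K) :
    IntegrableOn (fun x => f (Real.exp (-x)) * Real.exp (-x) * x ^ m) (Ioi 0) := by
  have base : IntegrableOn (fun x => K * (x ^ m * Real.exp (-(1 * x)))) (Ioi 0) :=
    (J_int m one_pos).const_mul K
  apply base.mono' (Continuous.aestronglyMeasurable (by continuity)).restrict
  filter_upwards [ae_restrict_mem measurableSet_Ioi] with x hx
  have hmem : Real.exp (-x) ∈ Icc (0:ℝ) 1 := exp_mem_Icc (by simp [(mem_Ioi.1 hx).le])
  rw [Real.norm_eq_abs, abs_mul, abs_mul, Real.abs_exp,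
    abs_of_nonneg (pow_nonneg (mem_Ioi.1 hx).le m),
    show K * (x ^ m * Real.exp (-(1 * x))) = K * Real.exp (-x) * x ^ m by
      rw [one_mul]; ring]
  have h1 : |f (Real.exp (-x))| ≤ K := hK _ hmem
  have h2 : (0:ℝ) ≤ x ^ m := pow_nonneg (le_of_lt hx) m
  exact mul_le_mul_of_nonneg_right
    (mul_le_mul_of_nonneg_right h1 (Real.exp_pos (-x)).le) h2

lemma intMu_aux (μ : Measure ℝ) (hμ : μ (Set.Iio 0) = 0) {t : ℝ} (ht : 0 < t)
    (hint1 : Integrable (fun x => Real.exp (-(t * x))) μ)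
    (f : ℝ → ℝ) (hf : Continuous f) (K : ℝ) (hK : ∀ y ∈ Icc (0:ℝ) 1, |f y| ≤ K) :
    Integrable (fun x => f (Real.exp (-(t * x))) * Real.exp (-(t * x))) μ := by
  apply (hint1.const_mul K).mono' (Continuous.aestronglyMeasurable (by continuity))
  filter_upwards [ae_nn μ hμ] with x hx
  have hmem : Real.exp (-(t * x)) ∈ Icc (0:ℝ) 1 :=
    exp_mem_Icc (by simp [mul_nonneg ht.le hx])
  rw [Real.norm_eq_abs, abs_mul, Real.abs_exp]
  exact mul_le_mul_of_nonneg_right (hK _ hmem) (Real.exp_pos _).le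

lemma ind_int (m : ℕ) {s : ℝ} (hs : 0 ≤ s) :
    IntegrableOn ((Set.Iic s).indicator fun x : ℝ => x ^ m) (Ioi 0) := by
  rw [IntegrableOn, integrable_indicator_iff measurableSet_Iic]
  have : IntegrableOn (fun x : ℝ => x ^ m) (Icc 0 s) :=
    (continuous_pow m).integrableOn_Icc
  rw [IntegrableOn, Measure.restrict_restrict measurableSet_Iic]
  apply this.mono_set
  intro x hx
  exact ⟨hx.2.le, hx.1⟩

lemma ind_val (m : ℕ) {s : ℝ} (hs : 0 ≤ s) :
    ∫ x in Ioi (0:ℝ), (Set.Iic s).indicator (fun x : ℝ => x ^ m) x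
      = s ^ (m + 1) / (m + 1) := by
  rw [integral_indicator measurableSet_Iic, Measure.restrict_restrict measurableSet_Iic,
    show Set.Iic s ∩ Ioi 0 = Set.Ioc 0 s by ext x; simp [and_comm],
    ← intervalIntegral.integral_of_le hs, integral_pow]
  simp


lemma upper (n m : ℕ) (hnm : n = m + 1) (C : ℝ) (hC : 0 < C) (μ : Measure ℝ)
    (hμ : μ (Set.Iio 0) = 0)
    (hint : ∀ t : ℝ, 0 < t → Integrable (fun x => Real.exp (-(t * x))) μ)
    (h : Tendsto (fun t : ℝ => t ^ n * ∫ x, Real.exp (-(t * x)) ∂μ)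
      (nhdsWithin 0 (Set.Ioi 0)) (nhds C))
    (hfin : ∀ lam : ℝ, μ (Set.Iic lam) < ⊤)
    {δ θ : ℝ} (hδ : 0 < δ) (hθ : 0 < θ) :
    ∀ᶠ t in nhdsWithin 0 (Set.Ioi 0), t ^ n * (μ (Set.Iic t⁻¹)).toReal
      ≤ C / m.factorial * ((1 + δ) ^ (m + 1) / (m + 1) + 2 * δ * m.factorial) + θ := by
  set b : ℝ := Real.exp (-(1 + δ)) with hbdef
  set c : ℝ := Real.exp (-1) with hcdef
  have hb : 0 < b := Real.exp_pos _
  have hc : 0 < c := Real.exp_pos _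
  have hbc : b < c := Real.exp_lt_exp.2 (by linarith)
  obtain ⟨q, hq⟩ := exists_polynomial_near_of_continuousOn 0 1 (phi b c)
    ((phi_cont hc).continuousOn) δ hδ
  set P : Polynomial ℝ := q + Polynomial.C δ with hPdef
  have hPeval : ∀ y : ℝ, P.eval y = q.eval y + δ := by intro y; simp [hPdef]
  have hup : ∀ y ∈ Icc (0:ℝ) 1, phi b c y ≤ P.eval y := by
    intro y hy
    have h1 := (abs_lt.1 (hq y hy)).1
    rw [hPeval]; linarith
  have hP2 : ∀ y ∈ Icc (0:ℝ) 1, P.eval y ≤ phi b c y + 2 * δ := by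
    intro y hy
    have h1 := (abs_lt.1 (hq y hy)).2
    rw [hPeval]; linarith
  have hKP : ∀ y ∈ Icc (0:ℝ) 1, |P.eval y| ≤ 1 / c + 2 * δ := by
    intro y hy
    have h1 := hup y hy
    have h2 := hP2 y hy
    have h3 : 0 ≤ phi b c y := phi_nonneg hc
    have h4 : phi b c y ≤ 1 / c := phi_le hc
    rw [abs_le]; constructor <;> nlinarith
  -- Lebesgue-side bound
  have intP : IntegrableOn (fun x => P.eval (Real.exp (-x)) * Real.exp (-x) * x ^ m)
      (Ioi 0) := intOn_aux m (fun y => P.eval y) P.continuous (1 / c + 2 * δ) hKP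
  have intphi : IntegrableOn (fun x => phi b c (Real.exp (-x)) * Real.exp (-x) * x ^ m)
      (Ioi 0) := intOn_aux m (phi b c) (phi_cont hc) (1 / c) (fun y hy => by
        rw [abs_of_nonneg (phi_nonneg hc)]; exact phi_le hc)
  have hIbound : (∫ x in Ioi (0:ℝ), P.eval (Real.exp (-x)) * Real.exp (-x) * x ^ m)
      ≤ (1 + δ) ^ (m + 1) / (m + 1) + 2 * δ * m.factorial := by
    have step1 : (∫ x in Ioi (0:ℝ), P.eval (Real.exp (-x)) * Real.exp (-x) * x ^ m)
        ≤ ∫ x in Ioi (0:ℝ), (phi b c (Real.exp (-x)) * Real.exp (-x) * x ^ m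
            + 2 * δ * (x ^ m * Real.exp (-(1 * x)))) := by
      apply setIntegral_mono_on intP (intphi.add ((J_int m one_pos).const_mul (2 * δ)))
        measurableSet_Ioi
      intro x hx
      have hmem : Real.exp (-x) ∈ Icc (0:ℝ) 1 := exp_mem_Icc (by simp [(mem_Ioi.1 hx).le])
      have h2 := hP2 _ hmem
      have e1 : (0:ℝ) ≤ Real.exp (-x) * x ^ m :=
        mul_nonneg (Real.exp_pos _).le (pow_nonneg (le_of_lt hx) m)
      have h3 := mul_le_mul_of_nonneg_right h2 e1
      simp only [Pi.add_apply]
      rw [show (1:ℝ) * x = x by ring]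
      ring_nf at h3 ⊢
      linarith
    have step2 : (∫ x in Ioi (0:ℝ), (phi b c (Real.exp (-x)) * Real.exp (-x) * x ^ m
            + 2 * δ * (x ^ m * Real.exp (-(1 * x)))))
        = (∫ x in Ioi (0:ℝ), phi b c (Real.exp (-x)) * Real.exp (-x) * x ^ m)
            + 2 * δ * m.factorial := by
      rw [integral_add intphi ((J_int m one_pos).const_mul (2 * δ)),
        integral_const_mul, J_val m one_pos]
      norm_num
    have step3 : (∫ x in Ioi (0:ℝ), phi b c (Real.exp (-x)) * Real.exp (-x) * x ^ m)
        ≤ (1 + δ) ^ (m + 1) / (m + 1) := by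
      have hle : (∫ x in Ioi (0:ℝ), phi b c (Real.exp (-x)) * Real.exp (-x) * x ^ m)
          ≤ ∫ x in Ioi (0:ℝ), (Set.Iic (1 + δ)).indicator (fun x : ℝ => x ^ m) x := by
        apply setIntegral_mono_on intphi (ind_int m (by linarith)) measurableSet_Ioi
        intro x hx
        by_cases hxs : x ≤ 1 + δ
        · rw [indicator_of_mem (Set.mem_Iic.2 hxs)]
          have h1 := phi_mul_le_one (b := b) hc (Real.exp_pos (-x)).le
          have h2 : (0:ℝ) ≤ x ^ m := pow_nonneg (le_of_lt hx) m
          nlinarith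
        · push_neg at hxs
          have hyb : Real.exp (-x) < b := Real.exp_lt_exp.2 (by linarith)
          rw [indicator_of_notMem (by simpa [Set.mem_Iic, not_le] using hxs : x ∉ Set.Iic (1+δ)), phi_eq_zero hbc hyb,
            zero_mul, zero_mul]
      rw [ind_val m (by linarith)] at hle
      exact hle
    linarith
  -- limit
  have hkey := key n m hnm C μ hint h P
  have hA : C / m.factorial *
        (∫ x in Ioi (0:ℝ), P.eval (Real.exp (-x)) * Real.exp (-x) * x ^ m)
      ≤ C / m.factorial * ((1 + δ) ^ (m + 1) / (m + 1) + 2 * δ * m.factorial) :=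
    mul_le_mul_of_nonneg_left hIbound (by positivity)
  have ev2 : ∀ᶠ t in nhdsWithin 0 (Set.Ioi 0),
      t ^ n * (∫ x, P.eval (Real.exp (-(t * x))) * Real.exp (-(t * x)) ∂μ)
      ≤ C / m.factorial * ((1 + δ) ^ (m + 1) / (m + 1) + 2 * δ * m.factorial) + θ := by
    have := hkey.eventually_lt_const (by linarith :
      C / m.factorial * (∫ x in Ioi (0:ℝ),
        P.eval (Real.exp (-x)) * Real.exp (-x) * x ^ m)
      < C / m.factorial * ((1 + δ) ^ (m + 1) / (m + 1) + 2 * δ * m.factorial) + θ)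
    filter_upwards [this] with t ht
    exact ht.le
  have ev1 : ∀ᶠ t in nhdsWithin 0 (Set.Ioi 0),
      t ^ n * (μ (Set.Iic t⁻¹)).toReal
      ≤ t ^ n * ∫ x, P.eval (Real.exp (-(t * x))) * Real.exp (-(t * x)) ∂μ := by
    filter_upwards [self_mem_nhdsWithin] with t ht
    have ht : (0:ℝ) < t := ht
    have hNt : (μ (Set.Iic t⁻¹)).toReal
        = ∫ x, (Set.Iic t⁻¹).indicator (fun _ => (1:ℝ)) x ∂μ := by
      rw [integral_indicator_const (1:ℝ) measurableSet_Iic, smul_eq_mul, mul_one, measureReal_def]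
    have hmono : (∫ x, (Set.Iic t⁻¹).indicator (fun _ => (1:ℝ)) x ∂μ)
        ≤ ∫ x, P.eval (Real.exp (-(t * x))) * Real.exp (-(t * x)) ∂μ := by
      apply integral_mono_ae
      · rw [integrable_indicator_iff measurableSet_Iic]
        exact integrableOn_const (hfin _).ne
      · exact intMu_aux μ hμ ht (hint t ht) (fun y => P.eval y) P.continuous (1 / c + 2 * δ) hKP
      filter_upwards [ae_nn μ hμ] with x hx
      have hmem : Real.exp (-(t * x)) ∈ Icc (0:ℝ) 1 :=
        exp_mem_Icc (by simp [mul_nonneg ht.le hx])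
      by_cases hxt : x ≤ t⁻¹
      · rw [indicator_of_mem (Set.mem_Iic.2 hxt)]
        have htx : t * x ≤ 1 := by
          have := mul_le_mul_of_nonneg_left hxt ht.le
          rwa [mul_inv_cancel₀ ht.ne'] at this
        have hcy : c ≤ Real.exp (-(t * x)) := Real.exp_le_exp.2 (by linarith)
        calc (1:ℝ) = Real.exp (-(t * x)) * phi b c (Real.exp (-(t * x))) :=
              (phi_mul_eq_one hc hbc hcy).symm
          _ ≤ Real.exp (-(t * x)) * P.eval (Real.exp (-(t * x))) :=
              mul_le_mul_of_nonneg_left (hup _ hmem) (Real.exp_pos _).le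
          _ = P.eval (Real.exp (-(t * x))) * Real.exp (-(t * x)) := mul_comm _ _
      · rw [indicator_of_notMem (fun hmem' => hxt (Set.mem_Iic.1 hmem'))]
        exact mul_nonneg ((phi_nonneg hc).trans (hup _ hmem)) (Real.exp_pos _).le
    rw [hNt]
    exact mul_le_mul_of_nonneg_left hmono (pow_nonneg ht.le n)
  filter_upwards [ev1, ev2] with t h1 h2
  exact h1.trans h2
lemma lower (n m : ℕ) (hnm : n = m + 1) (C : ℝ) (hC : 0 < C) (μ : Measure ℝ)
    (hμ : μ (Set.Iio 0) = 0)
    (hint : ∀ t : ℝ, 0 < t → Integrable (fun x => Real.exp (-(t * x))) μ)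
    (h : Tendsto (fun t : ℝ => t ^ n * ∫ x, Real.exp (-(t * x)) ∂μ)
      (nhdsWithin 0 (Set.Ioi 0)) (nhds C))
    (hfin : ∀ lam : ℝ, μ (Set.Iic lam) < ⊤)
    {δ θ : ℝ} (hδ : 0 < δ) (hδ1 : δ < 1) (hθ : 0 < θ) :
    ∀ᶠ t in nhdsWithin 0 (Set.Ioi 0),
      C / m.factorial * ((1 - δ) ^ (m + 1) / (m + 1) - 2 * δ * m.factorial) - θ
        ≤ t ^ n * (μ (Set.Iic t⁻¹)).toReal := by
  set b : ℝ := Real.exp (-1) with hbdef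
  set c : ℝ := Real.exp (-(1 - δ)) with hcdef
  have hb : 0 < b := Real.exp_pos _
  have hc : 0 < c := Real.exp_pos _
  have hbc : b < c := Real.exp_lt_exp.2 (by linarith)
  obtain ⟨q, hq⟩ := exists_polynomial_near_of_continuousOn 0 1 (phi b c)
    ((phi_cont hc).continuousOn) δ hδ
  set P : Polynomial ℝ := q - Polynomial.C δ with hPdef
  have hPeval : ∀ y : ℝ, P.eval y = q.eval y - δ := by intro y; simp [hPdef]
  have hlow : ∀ y ∈ Icc (0:ℝ) 1, P.eval y ≤ phi b c y := by
    intro y hy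
    have h1 := (abs_lt.1 (hq y hy)).2
    rw [hPeval]; linarith
  have hP2 : ∀ y ∈ Icc (0:ℝ) 1, phi b c y - 2 * δ ≤ P.eval y := by
    intro y hy
    have h1 := (abs_lt.1 (hq y hy)).1
    rw [hPeval]; linarith
  have hKP : ∀ y ∈ Icc (0:ℝ) 1, |P.eval y| ≤ 1 / c + 2 * δ := by
    intro y hy
    have h1 := hlow y hy
    have h2 := hP2 y hy
    have h3 : 0 ≤ phi b c y := phi_nonneg hc
    have h4 : phi b c y ≤ 1 / c := phi_le hc
    rw [abs_le]; constructor <;> nlinarith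
  have intP : IntegrableOn (fun x => P.eval (Real.exp (-x)) * Real.exp (-x) * x ^ m)
      (Ioi 0) := intOn_aux m (fun y => P.eval y) P.continuous (1 / c + 2 * δ) hKP
  have intphi : IntegrableOn (fun x => phi b c (Real.exp (-x)) * Real.exp (-x) * x ^ m)
      (Ioi 0) := intOn_aux m (phi b c) (phi_cont hc) (1 / c) (fun y hy => by
        rw [abs_of_nonneg (phi_nonneg hc)]; exact phi_le hc)
  have hIbound : (1 - δ) ^ (m + 1) / (m + 1) - 2 * δ * m.factorial
      ≤ ∫ x in Ioi (0:ℝ), P.eval (Real.exp (-x)) * Real.exp (-x) * x ^ m := by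
    have step1 : (∫ x in Ioi (0:ℝ), (phi b c (Real.exp (-x)) * Real.exp (-x) * x ^ m
            - 2 * δ * (x ^ m * Real.exp (-(1 * x)))))
        ≤ ∫ x in Ioi (0:ℝ), P.eval (Real.exp (-x)) * Real.exp (-x) * x ^ m := by
      apply setIntegral_mono_on (intphi.sub ((J_int m one_pos).const_mul (2 * δ))) intP
        measurableSet_Ioi
      intro x hx
      have hmem : Real.exp (-x) ∈ Icc (0:ℝ) 1 := exp_mem_Icc (by simp [(mem_Ioi.1 hx).le])
      have h2 := hP2 _ hmem
      have e1 : (0:ℝ) ≤ Real.exp (-x) * x ^ m :=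
        mul_nonneg (Real.exp_pos _).le (pow_nonneg (le_of_lt hx) m)
      have h3 := mul_le_mul_of_nonneg_right h2 e1
      simp only [Pi.sub_apply]
      rw [show (1:ℝ) * x = x by ring]
      ring_nf at h3 ⊢
      linarith
    have step2 : (∫ x in Ioi (0:ℝ), (phi b c (Real.exp (-x)) * Real.exp (-x) * x ^ m
            - 2 * δ * (x ^ m * Real.exp (-(1 * x)))))
        = (∫ x in Ioi (0:ℝ), phi b c (Real.exp (-x)) * Real.exp (-x) * x ^ m)
            - 2 * δ * m.factorial := by
      rw [integral_sub intphi ((J_int m one_pos).const_mul (2 * δ)),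
        integral_const_mul, J_val m one_pos]
      norm_num
    have step3 : (1 - δ) ^ (m + 1) / (m + 1)
        ≤ ∫ x in Ioi (0:ℝ), phi b c (Real.exp (-x)) * Real.exp (-x) * x ^ m := by
      have hle : (∫ x in Ioi (0:ℝ), (Set.Iic (1 - δ)).indicator (fun x : ℝ => x ^ m) x)
          ≤ ∫ x in Ioi (0:ℝ), phi b c (Real.exp (-x)) * Real.exp (-x) * x ^ m := by
        apply setIntegral_mono_on (ind_int m (by linarith)) intphi measurableSet_Ioi
        intro x hx
        by_cases hxs : x ≤ 1 - δ
        · rw [indicator_of_mem (Set.mem_Iic.2 hxs)]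
          have hcy : c ≤ Real.exp (-x) := Real.exp_le_exp.2 (by linarith)
          have h1 := phi_mul_eq_one hc hbc hcy
          have h2 : (0:ℝ) ≤ x ^ m := pow_nonneg (le_of_lt hx) m
          nlinarith
        · rw [indicator_of_notMem
            (by simpa [Set.mem_Iic, not_le] using hxs : x ∉ Set.Iic (1 - δ))]
          exact mul_nonneg (mul_nonneg (phi_nonneg hc) (Real.exp_pos _).le)
            (pow_nonneg (le_of_lt hx) m)
      rw [ind_val m (by linarith)] at hle
      exact hle
    linarith
  have hkey := key n m hnm C μ hint h P
  have hA : C / m.factorial * ((1 - δ) ^ (m + 1) / (m + 1) - 2 * δ * m.factorial)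
      ≤ C / m.factorial *
        (∫ x in Ioi (0:ℝ), P.eval (Real.exp (-x)) * Real.exp (-x) * x ^ m) :=
    mul_le_mul_of_nonneg_left hIbound (by positivity)
  have ev2 : ∀ᶠ t in nhdsWithin 0 (Set.Ioi 0),
      C / m.factorial * ((1 - δ) ^ (m + 1) / (m + 1) - 2 * δ * m.factorial) - θ
      ≤ t ^ n * (∫ x, P.eval (Real.exp (-(t * x))) * Real.exp (-(t * x)) ∂μ) := by
    have := hkey.eventually_const_lt (by linarith :
      C / m.factorial * ((1 - δ) ^ (m + 1) / (m + 1) - 2 * δ * m.factorial) - θ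
      < C / m.factorial * (∫ x in Ioi (0:ℝ),
        P.eval (Real.exp (-x)) * Real.exp (-x) * x ^ m))
    filter_upwards [this] with t ht
    exact ht.le
  have ev1 : ∀ᶠ t in nhdsWithin 0 (Set.Ioi 0),
      t ^ n * (∫ x, P.eval (Real.exp (-(t * x))) * Real.exp (-(t * x)) ∂μ)
      ≤ t ^ n * (μ (Set.Iic t⁻¹)).toReal := by
    filter_upwards [self_mem_nhdsWithin] with t ht
    have ht : (0:ℝ) < t := ht
    have hNt : (μ (Set.Iic t⁻¹)).toReal
        = ∫ x, (Set.Iic t⁻¹).indicator (fun _ => (1:ℝ)) x ∂μ := by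
      rw [integral_indicator_const (1:ℝ) measurableSet_Iic, smul_eq_mul, mul_one, measureReal_def]
    have hmono : (∫ x, P.eval (Real.exp (-(t * x))) * Real.exp (-(t * x)) ∂μ)
        ≤ ∫ x, (Set.Iic t⁻¹).indicator (fun _ => (1:ℝ)) x ∂μ := by
      apply integral_mono_ae
      · exact intMu_aux μ hμ ht (hint t ht) (fun y => P.eval y) P.continuous
          (1 / c + 2 * δ) hKP
      · rw [integrable_indicator_iff measurableSet_Iic]
        exact integrableOn_const (hfin _).ne
      filter_upwards [ae_nn μ hμ] with x hx
      have hmem : Real.exp (-(t * x)) ∈ Icc (0:ℝ) 1 :=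
        exp_mem_Icc (by simp [mul_nonneg ht.le hx])
      by_cases hxt : x ≤ t⁻¹
      · rw [indicator_of_mem (Set.mem_Iic.2 hxt)]
        calc P.eval (Real.exp (-(t * x))) * Real.exp (-(t * x))
            = Real.exp (-(t * x)) * P.eval (Real.exp (-(t * x))) := mul_comm _ _
          _ ≤ Real.exp (-(t * x)) * phi b c (Real.exp (-(t * x))) :=
              mul_le_mul_of_nonneg_left (hlow _ hmem) (Real.exp_pos _).le
          _ ≤ 1 := phi_mul_le_one hc (Real.exp_pos _).le
      · rw [indicator_of_notMem (fun hmem' => hxt (Set.mem_Iic.1 hmem'))]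
        push_neg at hxt
        have htx : 1 < t * x := by
          have := mul_lt_mul_of_pos_left hxt ht
          rwa [mul_inv_cancel₀ ht.ne'] at this
        have hyb : Real.exp (-(t * x)) < b := Real.exp_lt_exp.2 (by linarith)
        calc P.eval (Real.exp (-(t * x))) * Real.exp (-(t * x))
            = Real.exp (-(t * x)) * P.eval (Real.exp (-(t * x))) := mul_comm _ _
          _ ≤ Real.exp (-(t * x)) * phi b c (Real.exp (-(t * x))) :=
              mul_le_mul_of_nonneg_left (hlow _ hmem) (Real.exp_pos _).le
          _ = Real.exp (-(t * x)) * 0 := by rw [phi_eq_zero hbc hyb]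
          _ = 0 := mul_zero _
    rw [hNt]
    exact mul_le_mul_of_nonneg_left hmono (pow_nonneg ht.le n)
  filter_upwards [ev1, ev2] with t h1 h2
  exact h2.trans h1

end KaramataAux

open KaramataAux in
/-- Karamata's Tauberian theorem: if `N(λ) = μ(Iic λ)` is the (nondecreasing)
counting function of a measure `μ` supported on `[0,∞)` and
`∫ e^{-tλ} dμ(λ) ~ C t^{-n}` as `t → 0⁺`, then `N(λ) ~ C λⁿ/Γ(n+1)` as `λ → ∞`. -/
theorem stmt16 (n : ℕ) (hn : 1 ≤ n) (C : ℝ) (hC : 0 < C)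
    (μ : Measure ℝ) (hμ : μ (Set.Iio 0) = 0)
    (h : Tendsto (fun t : ℝ => t ^ n * ∫ x, Real.exp (-(t * x)) ∂μ)
      (nhdsWithin 0 (Set.Ioi 0)) (nhds C)) :
    Tendsto (fun lam : ℝ => (μ (Set.Iic lam)).toReal / lam ^ n)
      atTop (nhds (C / Real.Gamma ((n : ℝ) + 1))) := by
  obtain ⟨m, hnm⟩ : ∃ m, n = m + 1 := ⟨n - 1, by omega⟩
  have hint := integrable_exp n C hC μ hμ h
  have hfin := finite_Iic μ hμ (hint 1 one_pos)
  have hΓ : Real.Gamma ((n : ℝ) + 1) = n.factorial := Real.Gamma_nat_eq_factorial n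
  rw [hΓ]
  set L : ℝ := C / n.factorial with hLdef
  have hfacc : (n.factorial : ℝ) = ((m : ℝ) + 1) * m.factorial := by
    rw [hnm, Nat.factorial_succ]; push_cast; ring
  rw [Metric.tendsto_nhds]
  intro ε hε
  have hval1 : C / m.factorial * ((1 + 0) ^ (m + 1) / ((m : ℝ) + 1)
      + 2 * 0 * m.factorial) + 0 = L := by
    rw [hLdef, hfacc]
    have h1 : (m.factorial : ℝ) ≠ 0 := by positivity
    have h2 : ((m : ℝ) + 1) ≠ 0 := by positivity
    field_simp
    ring
  have hval2 : C / m.factorial * ((1 - 0) ^ (m + 1) / ((m : ℝ) + 1)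
      - 2 * 0 * m.factorial) - 0 = L := by
    rw [hLdef, hfacc]
    have h1 : (m.factorial : ℝ) ≠ 0 := by positivity
    have h2 : ((m : ℝ) + 1) ≠ 0 := by positivity
    field_simp
    ring
  have hcont1 : Tendsto (fun δ : ℝ => C / m.factorial * ((1 + δ) ^ (m + 1) / ((m : ℝ) + 1)
      + 2 * δ * m.factorial) + δ) (nhds 0) (nhds L) := by
    rw [← hval1]
    exact Continuous.tendsto (by continuity) 0
  have hcont2 : Tendsto (fun δ : ℝ => C / m.factorial * ((1 - δ) ^ (m + 1) / ((m : ℝ) + 1)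
      - 2 * δ * m.factorial) - δ) (nhds 0) (nhds L) := by
    rw [← hval2]
    exact Continuous.tendsto (by continuity) 0
  have hev1 := hcont1.eventually_lt_const (show L < L + ε by linarith)
  have hev2 := hcont2.eventually_const_lt (show L - ε < L by linarith)
  have hmemev : ∀ᶠ δ : ℝ in nhdsWithin 0 (Set.Ioi 0), δ ∈ Set.Ioo (0:ℝ) 1 :=
    eventually_of_mem (Ioo_mem_nhdsGT_of_mem ⟨le_refl (0:ℝ), one_pos⟩) fun _ hx => hx
  obtain ⟨δ, hδmem, hA, hB⟩ := (hmemev.and ((hev1.filter_mono nhdsWithin_le_nhds).and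
    (hev2.filter_mono nhdsWithin_le_nhds))).exists
  have hu := upper n m hnm C hC μ hμ hint h hfin hδmem.1 hδmem.1
  have hl := lower n m hnm C hC μ hμ hint h hfin hδmem.1 hδmem.2 hδmem.1
  have hcomb : ∀ᶠ t in nhdsWithin (0:ℝ) (Set.Ioi 0),
      dist (t ^ n * (μ (Set.Iic t⁻¹)).toReal) L < ε := by
    filter_upwards [hu, hl] with t h1 h2
    rw [Real.dist_eq, abs_sub_lt_iff]
    constructor <;> linarith
  have htr := tendsto_inv_atTop_nhdsGT_zero.eventually hcomb
  filter_upwards [htr] with lam hlam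
  rw [inv_inv] at hlam
  rw [show (μ (Set.Iic lam)).toReal / lam ^ n = lam⁻¹ ^ n * (μ (Set.Iic lam)).toReal by
    rw [div_eq_mul_inv, ← inv_pow, mul_comm]]
  exact hlam
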